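/- Trace identity for doubly stochastic chains: let N ≥ 2 and let P be an irreducible N×N doubly stochastic matrix (nonnegative entries, every row and every column sums to 1). Let Π be the N×N matrix with all entries equal to 1/N, assume I − P + Π is invertible, and set D = (I − P + Π)⁻¹ − Π (the deviation matrix). If M is a mean first passage time matrix of P, then Σ_{i≠j} M_{ij} = N²·Tr(D); equivalently, the total sum of mean first passage times equals N² times the trace of the deviation matrix. -/

import Mathlib

open Matrix Finset

/-- An N×N real matrix is row-stochastic: nonnegative entries, each row sums to 1. -/
def IsRowStochastic {N : ℕ} (P : Matrix (Fin N) (Fin N) ℝ) : Prop :=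
  (∀ i j, 0 ≤ P i j) ∧ ∀ i, ∑ j, P i j = 1

/-- Irreducibility: for all i, j there is k ≥ 1 with (P^k)_{ij} > 0. -/
def IsIrreducibleMC {N : ℕ} (P : Matrix (Fin N) (Fin N) ℝ) : Prop :=
  ∀ i j, ∃ k : ℕ, 1 ≤ k ∧ 0 < (P ^ k) i j

/-- M is a mean first passage time matrix of P. -/
def IsMFPT {N : ℕ} (P M : Matrix (Fin N) (Fin N) ℝ) : Prop :=
  ∀ i j, M i j = 1 + ∑ k ∈ Finset.univ.filter (fun k => k ≠ j), P i k * M k j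
theorem total_mfpt_eq_trace_deviation {N : ℕ} (hN : 2 ≤ N)
    (P : Matrix (Fin N) (Fin N) ℝ)
    (hnn : ∀ i j, 0 ≤ P i j)
    (hrow : ∀ i, ∑ j, P i j = 1)
    (hcol : ∀ j, ∑ i, P i j = 1)
    (hirr : IsIrreducibleMC P)
    (hinv : IsUnit (1 - P + Matrix.of fun _ _ => (N : ℝ)⁻¹))
    (D : Matrix (Fin N) (Fin N) ℝ)
    (hD : D = (1 - P + Matrix.of fun _ _ => (N : ℝ)⁻¹)⁻¹
        - Matrix.of fun _ _ => (N : ℝ)⁻¹)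
    (M : Matrix (Fin N) (Fin N) ℝ) (hM : IsMFPT P M) :
    ∑ i, ∑ j ∈ Finset.univ.filter (fun j => j ≠ i), M i j
      = (N : ℝ) ^ 2 * Matrix.trace D := by
  have hN0 : (N : ℝ) ≠ 0 := by
    have : (0:ℕ) < N := by omega
    exact_mod_cast this.ne'
  set U : Matrix (Fin N) (Fin N) ℝ := Matrix.of fun _ _ => (N : ℝ)⁻¹ with hU
  set A : Matrix (Fin N) (Fin N) ℝ := 1 - P + U with hA
  set Z : Matrix (Fin N) (Fin N) ℝ := A⁻¹ with hZdef
  have hdet : IsUnit A.det := (Matrix.isUnit_iff_isUnit_det A).mp hinv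
  have hZA : Z * A = 1 := Matrix.nonsing_inv_mul A hdet
  have hAZ : A * Z = 1 := Matrix.mul_nonsing_inv A hdet
  set J : Matrix (Fin N) (Fin N) ℝ := Matrix.of fun _ _ => (1:ℝ) with hJ
  have hcard : (Finset.univ : Finset (Fin N)).card = N := by simp
  have hUP : U * P = U := by
    ext i j
    simp [hU, Matrix.mul_apply, ← Finset.mul_sum, hcol]
  have hPU : P * U = U := by
    ext i j
    simp [hU, Matrix.mul_apply, ← Finset.sum_mul, hrow]
  have hUU : U * U = U := by
    ext i j
    simp only [hU, Matrix.mul_apply, Matrix.of_apply, Finset.sum_const, hcard, nsmul_eq_mul]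
    field_simp
  have hUJ : U * J = J := by
    ext i j
    simp only [hU, hJ, Matrix.mul_apply, Matrix.of_apply, mul_one, Finset.sum_const, hcard,
      nsmul_eq_mul]
    field_simp
  have hUA : U * A = U := by
    rw [hA, mul_add, mul_sub, mul_one, hUP, hUU]; abel
  have hAU : A * U = U := by
    rw [hA, add_mul, sub_mul, one_mul, hPU, hUU]; abel
  have hZU : Z * U = U := by
    calc Z * U = Z * (A * U) := by rw [hAU]
    _ = (Z * A) * U := by rw [mul_assoc]
    _ = U := by rw [hZA, one_mul]
  have hUZ : U * Z = U := by
    calc U * Z = (U * A) * Z := by rw [hUA]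
    _ = U * (A * Z) := by rw [mul_assoc]
    _ = U := by rw [hAZ, mul_one]
  have hZJ : Z * J = J := by
    calc Z * J = Z * (U * J) := by rw [hUJ]
    _ = (Z * U) * J := by rw [mul_assoc]
    _ = J := by rw [hZU, hUJ]
  set Dg : Matrix (Fin N) (Fin N) ℝ := Matrix.diagonal (fun j => M j j) with hDg
  have hMmat : M = J + (P * M - P * Dg) := by
    ext i j
    have h := hM i j
    rw [Finset.filter_ne', Finset.sum_erase_eq_sub (Finset.mem_univ j)] at h
    simp only [Matrix.add_apply, Matrix.sub_apply, hDg, Matrix.mul_diagonal, hJ,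
      Matrix.of_apply, Matrix.mul_apply, Matrix.diagonal_apply, mul_ite, mul_zero,
      Finset.sum_ite_eq', Finset.mem_univ, if_true]
    rw [h]
  have hAM : A * M = J - P * Dg + U * M := by
    rw [hA, add_mul, sub_mul, one_mul]
    nth_rewrite 1 [hMmat]
    abel
  have hMeq : M = J - Z * (P * Dg) + U * M := by
    have h1 : Z * (A * M) = M := by rw [← mul_assoc, hZA, one_mul]
    rw [hAM, mul_add, mul_sub, hZJ, ← mul_assoc Z U M, hZU] at h1
    exact h1.symm
  have hUDg : U * Dg = J := by
    have h2 := congrArg (fun X => U * X) hMeq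
    simp only [mul_add, mul_sub] at h2
    rw [hUJ, ← mul_assoc U Z (P * Dg), hUZ, ← mul_assoc U P Dg, hUP,
      ← mul_assoc U U M, hUU] at h2
    have h3 : (J - U * Dg) + U * M = 0 + U * M := by rw [zero_add]; exact h2.symm
    have h4 := add_right_cancel h3
    exact (sub_eq_zero.mp h4).symm
  have hdiag : ∀ j, M j j = N := by
    intro j
    have h : (U * Dg) j j = J j j := by rw [hUDg]
    rw [hDg, Matrix.mul_diagonal] at h
    simp only [hU, hJ, Matrix.of_apply] at h
    field_simp at h
    linarith
  have hZP : Z * P = Z + U - 1 := by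
    have h := hZA
    rw [hA, mul_add, mul_sub, mul_one, hZU] at h
    rw [← h]; abel
  have hZPjj : ∀ j, ∑ k, Z j k * P k j = Z j j + (N:ℝ)⁻¹ - 1 := by
    intro j
    have h2 : (Z * P) j j = (Z + U - 1) j j := by rw [hZP]
    simpa [Matrix.mul_apply, hU, Matrix.one_apply] using h2
  have hcolsum : ∀ j, ∑ i, M i j = (N:ℝ)^2 * Z j j := by
    intro j
    have h : M j j = (J - Z * (P * Dg) + U * M) j j := by rw [← hMeq]
    simp only [Matrix.add_apply, Matrix.sub_apply, hDg, Matrix.mul_diagonal,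
      Matrix.mul_apply, hJ, hU, Matrix.of_apply, hdiag, Matrix.diagonal_apply, mul_ite,
      mul_zero, Finset.sum_ite_eq', Finset.mem_univ, if_true] at h
    have e1 : ∑ x : Fin N, Z j x * (P x j * (N:ℝ)) = (Z j j + (N:ℝ)⁻¹ - 1) * N := by
      rw [← hZPjj j, Finset.sum_mul]
      exact Finset.sum_congr rfl fun _ _ => by ring
    rw [e1, ← Finset.mul_sum] at h
    have h2 := congrArg (fun x => (N:ℝ) * x) h
    simp only [mul_add, mul_sub, mul_one, ← mul_assoc, mul_inv_cancel₀ hN0] at h2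
    nlinarith [h2]
  have h1 : ∀ i, ∑ j ∈ Finset.univ.filter (fun j => j ≠ i), M i j = (∑ j, M i j) - M i i := by
    intro i
    rw [Finset.filter_ne', Finset.sum_erase_eq_sub (Finset.mem_univ i)]
  calc ∑ i, ∑ j ∈ Finset.univ.filter (fun j => j ≠ i), M i j
      = ∑ i, ((∑ j, M i j) - M i i) := Finset.sum_congr rfl (fun i _ => h1 i)
    _ = (∑ i, ∑ j, M i j) - ∑ i, M i i := Finset.sum_sub_distrib _ _
    _ = (∑ j, ∑ i, M i j) - ∑ i, M i i := by rw [Finset.sum_comm]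
    _ = (∑ j, (N:ℝ)^2 * Z j j) - ∑ i : Fin N, (N:ℝ) := by
        rw [Finset.sum_congr rfl (fun j _ => hcolsum j),
          Finset.sum_congr rfl (fun i _ => hdiag i)]
    _ = (N:ℝ)^2 * (∑ j, Z j j) - (N:ℝ) * (N:ℝ) := by
        rw [← Finset.mul_sum, Finset.sum_const, hcard, nsmul_eq_mul]
    _ = (N : ℝ) ^ 2 * Matrix.trace D := by
        rw [hD]
        simp only [Matrix.trace, Matrix.diag, Matrix.sub_apply, hU, Matrix.of_apply,
          Finset.sum_sub_distrib, Finset.sum_const, hcard, nsmul_eq_mul]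
        field_simp
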